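/- If n is an odd positive integer, then the number of positive divisors of n satisfies d(n) ≤ 4·(3/35)^{1/3} · n^{1/3}; in particular d(n) < 1.764 · n^{1/3}. -/

import Mathlib

open Finset

lemma pow3A : ∀ k : ℕ, (k+1)^3 ≤ 3 * 3^k := by
  intro k
  induction k with
  | zero => norm_num
  | succ k ih =>
    rcases Nat.lt_or_ge k 2 with h | h
    · interval_cases k <;> norm_num
    · have h3 : (k+2)^3 ≤ 3 * (k+1)^3 := by nlinarith [h, Nat.mul_le_mul h h, Nat.mul_le_mul (Nat.mul_le_mul h h) h]
      calc (k+2)^3 ≤ 3 * (k+1)^3 := h3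
        _ ≤ 3 * (3 * 3^k) := by nlinarith
        _ = 3 * 3^(k+1) := by ring

lemma pow3B : ∀ k : ℕ, 5 * (k+1)^3 ≤ 8 * 5^k := by
  intro k
  induction k with
  | zero => norm_num
  | succ k ih =>
    rcases Nat.lt_or_ge k 1 with h | h
    · interval_cases k <;> norm_num
    · have h3 : (k+2)^3 ≤ 5 * (k+1)^3 := by nlinarith [h, Nat.mul_le_mul h h]
      calc 5 * (k+2)^3 ≤ 5 * (5 * (k+1)^3) := by nlinarith
        _ ≤ 5 * (8 * 5^k) := by nlinarith
        _ = 8 * 5^(k+1) := by ring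

lemma pow3C : ∀ k : ℕ, 7 * (k+1)^3 ≤ 8 * 7^k := by
  intro k
  induction k with
  | zero => norm_num
  | succ k ih =>
    rcases Nat.lt_or_ge k 1 with h | h
    · interval_cases k <;> norm_num
    · have h3 : (k+2)^3 ≤ 7 * (k+1)^3 := by nlinarith [h, Nat.mul_le_mul h h]
      calc 7 * (k+2)^3 ≤ 7 * (7 * (k+1)^3) := by nlinarith
        _ ≤ 7 * (8 * 7^k) := by nlinarith
        _ = 8 * 7^(k+1) := by ring

lemma pow3D : ∀ k : ℕ, (k+1)^3 ≤ 11^k := by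
  intro k
  induction k with
  | zero => norm_num
  | succ k ih =>
    have h3 : (k+2)^3 ≤ 11 * (k+1)^3 := by nlinarith [k.zero_le, sq_nonneg k]
    calc (k+2)^3 ≤ 11 * (k+1)^3 := h3
      _ ≤ 11 * 11^k := by nlinarith
      _ = 11^(k+1) := by ring

lemma card_div_pp {p : ℕ} (pp : p.Prime) (k : ℕ) : (p^k).divisors.card = k + 1 := by
  rw [Nat.divisors_prime_pow pp, Finset.card_map, Finset.card_range]


lemma big_prime_bound {m : ℕ} (hm : m ≠ 0) (h : ∀ p ∈ m.primeFactors, 11 ≤ p) :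
    m.divisors.card ^ 3 ≤ m := by
  rw [Nat.card_divisors hm, ← Finset.prod_pow]
  conv_rhs => rw [← Nat.factorization_prod_pow_eq_self hm]
  rw [Finsupp.prod, Nat.support_factorization]
  apply Finset.prod_le_prod'
  intro p hp
  calc (m.factorization p + 1)^3 ≤ 11 ^ m.factorization p := pow3D _
    _ ≤ p ^ m.factorization p := Nat.pow_le_pow_left (h p hp) _

lemma key (n : ℕ) (hn : 0 < n) (hodd : Odd n) : 35 * n.divisors.card ^ 3 ≤ 192 * n := by
  have hn0 : n ≠ 0 := hn.ne'
  have h3p : Nat.Prime 3 := by norm_num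
  have h5p : Nat.Prime 5 := by norm_num
  have h7p : Nat.Prime 7 := by norm_num
  set a := n.factorization 3 with ha
  set m1 := ordCompl[3] n with hm1
  have hm1ne : m1 ≠ 0 := (Nat.ordCompl_pos 3 hn0).ne'
  set b := m1.factorization 5 with hb
  set m2 := ordCompl[5] m1 with hm2
  have hm2ne : m2 ≠ 0 := (Nat.ordCompl_pos 5 hm1ne).ne'
  set c := m2.factorization 7 with hc
  set m3 := ordCompl[7] m2 with hm3
  have hm3ne : m3 ≠ 0 := (Nat.ordCompl_pos 7 hm2ne).ne'
  have e1 : 3 ^ a * m1 = n := Nat.ordProj_mul_ordCompl_eq_self n 3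
  have e2 : 5 ^ b * m2 = m1 := Nat.ordProj_mul_ordCompl_eq_self m1 5
  have e3 : 7 ^ c * m3 = m2 := Nat.ordProj_mul_ordCompl_eq_self m2 7
  have cop1 : Nat.Coprime (3 ^ a) m1 := (Nat.coprime_ordCompl h3p hn0).pow_left a
  have cop2 : Nat.Coprime (5 ^ b) m2 := (Nat.coprime_ordCompl h5p hm1ne).pow_left b
  have cop3 : Nat.Coprime (7 ^ c) m3 := (Nat.coprime_ordCompl h7p hm2ne).pow_left c
  have hd : n.divisors.card = (a+1) * ((b+1) * ((c+1) * m3.divisors.card)) := by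
    rw [← e1, cop1.card_divisors_mul, card_div_pp h3p, ← e2, cop2.card_divisors_mul,
      card_div_pp h5p, ← e3, cop3.card_divisors_mul, card_div_pp h7p]
  have hbig : ∀ p ∈ m3.primeFactors, 11 ≤ p := by
    intro p hp
    obtain ⟨pp, pdvd, -⟩ := Nat.mem_primeFactors.mp hp
    have hd2 : p ∣ m2 := pdvd.trans (Nat.ordCompl_dvd m2 7)
    have hd1 : p ∣ m1 := hd2.trans (Nat.ordCompl_dvd m1 5)
    have hdn : p ∣ n := hd1.trans (Nat.ordCompl_dvd n 3)
    have hp2 : p ≠ 2 := by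
      rintro rfl
      exact (Nat.not_even_iff_odd.mpr hodd) ((even_iff_two_dvd).mpr hdn)
    have hp3 : p ≠ 3 := by
      rintro rfl; exact Nat.not_dvd_ordCompl h3p hn0 hd1
    have hp5 : p ≠ 5 := by
      rintro rfl; exact Nat.not_dvd_ordCompl h5p hm1ne hd2
    have hp7 : p ≠ 7 := by
      rintro rfl; exact Nat.not_dvd_ordCompl h7p hm2ne pdvd
    by_contra hlt
    push_neg at hlt
    interval_cases p <;> simp_all (config := {decide := true})
  have hD : m3.divisors.card ^ 3 ≤ m3 := big_prime_bound hm3ne hbig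
  calc 35 * n.divisors.card ^ 3
      = ((a+1)^3 * (5*(b+1)^3)) * ((7*(c+1)^3) * m3.divisors.card ^ 3) := by rw [hd]; ring
    _ ≤ ((3*3^a) * (8*5^b)) * ((8*7^c) * m3) :=
        Nat.mul_le_mul (Nat.mul_le_mul (pow3A a) (pow3B b)) (Nat.mul_le_mul (pow3C c) hD)
    _ = 192 * (3^a * (5^b * (7^c * m3))) := by ring
    _ = 192 * n := by rw [e3, e2, e1]

/-- If `n` is an odd positive integer then `d(n) ≤ 4 (3/35)^(1/3) n^(1/3)`;
in particular `d(n) < 1.764 n^(1/3)`. -/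
theorem stmt9 (n : ℕ) (hn : 0 < n) (hodd : Odd n) :
    (n.divisors.card : ℝ) ≤ 4 * (3 / 35 : ℝ) ^ ((1 : ℝ) / 3) * (n : ℝ) ^ ((1 : ℝ) / 3) ∧
    (n.divisors.card : ℝ) < 1.764 * (n : ℝ) ^ ((1 : ℝ) / 3) := by
  set d : ℝ := (n.divisors.card : ℝ) with hdd
  have hdnn : (0:ℝ) ≤ d := by positivity
  have hnn : (0:ℝ) ≤ (n:ℝ) := by positivity
  have hcube : d ^ (3:ℕ) ≤ 192/35 * (n:ℝ) := by
    have := key n hn hodd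
    have : ((35 * n.divisors.card ^ 3 : ℕ) : ℝ) ≤ ((192 * n : ℕ) : ℝ) := by exact_mod_cast this
    push_cast at this
    linarith
  have hid : d = (d ^ (3:ℕ)) ^ ((1:ℝ)/3) := by
    rw [← Real.rpow_natCast d 3, ← Real.rpow_mul hdnn]
    norm_num
  have h64 : ((64:ℝ)) ^ ((1:ℝ)/3) = 4 := by
    rw [show (64:ℝ) = 4 ^ (3:ℕ) by norm_num, ← Real.rpow_natCast (4:ℝ) 3,
      ← Real.rpow_mul (by norm_num)]
    norm_num
  have hmain : d ≤ 4 * (3 / 35 : ℝ) ^ ((1 : ℝ) / 3) * (n : ℝ) ^ ((1 : ℝ) / 3) := by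
    calc d = (d ^ (3:ℕ)) ^ ((1:ℝ)/3) := hid
      _ ≤ (192/35 * (n:ℝ)) ^ ((1:ℝ)/3) :=
          Real.rpow_le_rpow (pow_nonneg hdnn 3) hcube (by norm_num)
      _ = (64 * (3/35) : ℝ) ^ ((1:ℝ)/3) * (n:ℝ) ^ ((1:ℝ)/3) := by
          rw [Real.mul_rpow (by norm_num) hnn]; norm_num
      _ = 4 * (3 / 35 : ℝ) ^ ((1 : ℝ) / 3) * (n : ℝ) ^ ((1:ℝ)/3) := by
          rw [Real.mul_rpow (by norm_num) (by norm_num), h64]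
  refine ⟨hmain, lt_of_le_of_lt hmain ?_⟩
  have hnpos : (0:ℝ) < (n:ℝ) ^ ((1:ℝ)/3) := by
    apply Real.rpow_pos_of_pos
    exact_mod_cast hn
  have hlt : (3 / 35 : ℝ) ^ ((1 : ℝ) / 3) < 0.441 := by
    calc (3 / 35 : ℝ) ^ ((1 : ℝ) / 3) < ((0.441:ℝ) ^ (3:ℕ)) ^ ((1:ℝ)/3) :=
        Real.rpow_lt_rpow (by norm_num) (by norm_num) (by norm_num)
      _ = 0.441 := by
          rw [← Real.rpow_natCast (0.441:ℝ) 3, ← Real.rpow_mul (by norm_num)]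
          norm_num
  have : 4 * (3 / 35 : ℝ) ^ ((1 : ℝ) / 3) < 1.764 := by nlinarith
  exact mul_lt_mul_of_pos_right this hnpos
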